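/- arXiv:2205.05350 — 2 statements merged into one kernel-verified Lean document; each statement's English description precedes it below -/
import Mathlib

section
/- If C ⊆ X is a clique, then C' = {x' : x ∈ C} is a clique. -/
open scoped Classical

noncomputable section

/-- Valencies of the Penttila–Williford scheme: `pwN r i` is the valency of class `i+1`. -/
def pwN (r : ℤ) : Fin 4 → ℤ := ![(r-1)*(r^2+1), r*(r-2)*(r^2+1), (r-1)*(r^2+1), 1]

/-- Intersection numbers of the Penttila–Williford scheme:
`pwP r k i j` is `p^{k+1}_{(i+1)(j+1)}` (indices in `Fin 4` stand for classes `1,…,4`). -/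
def pwP (r : ℤ) : Fin 4 → Fin 4 → Fin 4 → ℤ :=
  ![![![r^2,           r^2*(r-2),            r-2,           0],
     ![r^2*(r-2),     r^4-4*r^3+5*r^2-2*r,  r^2*(r-2),     0],
     ![r-2,           r^2*(r-2),            r^2,           1],
     ![0,             0,                    1,             0]],
    ![![r*(r-1),       (r-1)^3,              r*(r-1),       0],
     ![(r-1)^3,       r^4-4*r^3+7*r^2-8*r,  (r-1)^3,       1],
     ![r*(r-1),       (r-1)^3,              r*(r-1),       0],
     ![0,             1,                    0,             0]],
    ![![r-2,           r^2*(r-2),            r^2,           1],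
     ![r^2*(r-2),     r^4-4*r^3+5*r^2-2*r,  r^2*(r-2),     0],
     ![r^2,           r^2*(r-2),            r-2,           0],
     ![1,             0,                    0,             0]],
    ![![0,             0,                    (r-1)*(r^2+1), 0],
     ![0,             r*(r-1)*(r^2+1),      0,             0],
     ![(r-1)*(r^2+1), 0,                    0,             0],
     ![0,             0,                    0,             0]]]

/-- A symmetric 4-class association scheme on the finite vertex set `X` having the
parameters of the Penttila–Williford scheme: `R 0` is the identity relation, the
relations partition `X × X`, class `i+1` has valency `pwN r i`, and the intersection
numbers are given by `pwP`. -/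
structure PWScheme (r : ℕ) (X : Type*) [Fintype X] where
  R : Fin 5 → X → X → Prop
  symm : ∀ (i : Fin 5) (x y : X), R i x y → R i y x
  R0_iff : ∀ x y : X, R 0 x y ↔ x = y
  partition : ∀ x y : X, ∃! i : Fin 5, R i x y
  valency : ∀ (i : Fin 4) (x : X), ({y : X | R i.succ x y}.ncard : ℤ) = pwN r i
  inter : ∀ (k i j : Fin 4) (x y : X), R k.succ x y →
    ({z : X | R i.succ x z ∧ R j.succ y z}.ncard : ℤ) = pwP r k i j

namespace PWScheme

variable {r : ℕ} {X : Type*} [Fintype X]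

/-- `Y` is a `{0,3}`-clique. -/
def IsClique03 (S : PWScheme r X) (Y : Set X) : Prop :=
  ∀ x ∈ Y, ∀ y ∈ Y, S.R 0 x y ∨ S.R 3 x y

/-- A *clique*: a maximal `{0,3}`-clique. -/
def IsClique (S : PWScheme r X) (Y : Set X) : Prop :=
  S.IsClique03 Y ∧ ∀ Z : Set X, S.IsClique03 Z → Y ⊆ Z → Y = Z

/-- `R_i(x) = {y ∈ X : (x,y) ∈ R_i}`. -/
def rel (S : PWScheme r X) (i : Fin 5) (x : X) : Set X := {y : X | S.R i x y}

/-- `C' = {x' : x ∈ C}`, the set of antipodes of the points of `C`. -/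
def antiSet (S : PWScheme r X) (C : Set X) : Set X := {y : X | ∃ x ∈ C, S.R 4 x y}

/-- `Δ_C = {z ∈ X : (z,x) ∈ R2 for all x ∈ C}`. -/
def delta (S : PWScheme r X) (C : Set X) : Set X := {z : X | ∀ x ∈ C, S.R 2 z x}

/-- `T_C = Δ_C ∪ C ∪ C'`. -/
def T (S : PWScheme r X) (C : Set X) : Set X := S.delta C ∪ C ∪ S.antiSet C

/-- `𝒬(x)`: the set of cliques through `x`. -/
def Q (S : PWScheme r X) (x : X) : Set (Set X) := {C : Set X | S.IsClique C ∧ x ∈ C}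

/-- `λ(y)` (for `y ∈ R2(x)`): cliques `D ∈ 𝒬(x)` such that `y` is `3`-related to some
point of `D`. -/
def lam (S : PWScheme r X) (x y : X) : Set (Set X) :=
  {D : Set X | D ∈ S.Q x ∧ ∃ z ∈ D, S.R 3 y z}

/-- `μ(y)` (for `y ∈ R2(x)`): cliques `D ∈ 𝒬(x)` with `D ⊆ R2(y)`. -/
def mu (S : PWScheme r X) (x y : X) : Set (Set X) :=
  {D : Set X | D ∈ S.Q x ∧ ∀ z ∈ D, S.R 2 y z}

/-- Hypothesis 1: for `u, v ∈ R2(x)` with `(u,v) ∈ R3`,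
`|λ(u) ∩ λ(v)| + |R3(x) ∩ R3(u) ∩ R3(v)| = r² - 2r`. -/
def Hyp1 (S : PWScheme r X) : Prop :=
  ∀ x u v : X, u ∈ S.rel 2 x → v ∈ S.rel 2 x → S.R 3 u v →
    ((S.lam x u ∩ S.lam x v).ncard : ℤ) +
      ((S.rel 3 x ∩ S.rel 3 u ∩ S.rel 3 v).ncard : ℤ) = (r : ℤ)^2 - 2*r

/-- Hypothesis 2: for cliques `C1, C2` with `T_{C1} ∩ T_{C2} = ∅`, every point outside
`T_{C1} ∪ T_{C2}` lies on at least one clique disjoint from `T_{C1} ∪ T_{C2}`. -/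
def Hyp2 (S : PWScheme r X) : Prop :=
  ∀ C1 C2 : Set X, S.IsClique C1 → S.IsClique C2 → S.T C1 ∩ S.T C2 = ∅ →
    ∀ x : X, x ∉ S.T C1 ∪ S.T C2 →
      ∃ D : Set X, S.IsClique D ∧ x ∈ D ∧ D ∩ (S.T C1 ∪ S.T C2) = ∅

end PWScheme

section Aux

variable {r : ℕ} {X : Type*} [Fintype X]

/-- Every point has an antipode. -/
lemma pw_exists_antipode (S : PWScheme r X) (x : X) : ∃ y, S.R 4 x y := by
  have h := S.valency 3 x
  have h4 : ((3:Fin 4).succ : Fin 5) = 4 := rfl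
  rw [h4] at h
  have h1 : ({y : X | S.R 4 x y}).ncard = 1 := by
    have : pwN (r:ℤ) 3 = 1 := rfl
    rw [this] at h
    exact_mod_cast h
  obtain ⟨a, ha⟩ := Set.ncard_eq_one.mp h1
  exact ⟨a, by rw [Set.ext_iff] at ha; exact (ha a).mpr rfl⟩

/-- The antipode is unique. -/
lemma pw_antipode_unique (S : PWScheme r X) {x y z : X} (hy : S.R 4 x y)
    (hz : S.R 4 x z) : y = z := by
  have h := S.valency 3 x
  have h4 : ((3:Fin 4).succ : Fin 5) = 4 := rfl
  rw [h4] at h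
  have h1 : ({w : X | S.R 4 x w}).ncard = 1 := by
    have : pwN (r:ℤ) 3 = 1 := rfl
    rw [this] at h
    exact_mod_cast h
  obtain ⟨a, ha⟩ := Set.ncard_eq_one.mp h1
  rw [Set.ext_iff] at ha
  have := (ha y).mp hy
  have := (ha z).mp hz
  simp_all

/-- If `(x,x') ∈ R4` and `(x,y) ∈ R3` then `(x',y) ∈ R1`. -/
lemma pw_R3_to_R1 (S : PWScheme r X) {x x' y : X} (h4 : S.R 4 x x')
    (h3 : S.R 3 x y) : S.R 1 x' y := by
  have hi := S.inter 3 2 0 x x' h4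
  have hv := S.valency 2 x
  have e1 : ((2:Fin 4).succ : Fin 5) = 3 := rfl
  have e2 : ((0:Fin 4).succ : Fin 5) = 1 := rfl
  have e3 : ((3:Fin 4).succ : Fin 5) = 4 := rfl
  rw [e1, e2] at hi
  rw [e1] at hv
  have ep : pwP (r:ℤ) 3 2 0 = (r-1)*((r:ℤ)^2+1) := rfl
  have en : pwN (r:ℤ) 2 = (r-1)*((r:ℤ)^2+1) := rfl
  rw [ep] at hi
  rw [en] at hv
  have hsub : {z : X | S.R 3 x z ∧ S.R 1 x' z} ⊆ {z : X | S.R 3 x z} :=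
    fun z hz => hz.1
  have hcard : ({z : X | S.R 3 x z}).ncard ≤ ({z : X | S.R 3 x z ∧ S.R 1 x' z}).ncard := by
    have : (({z : X | S.R 3 x z ∧ S.R 1 x' z}).ncard : ℤ)
        = (({z : X | S.R 3 x z}).ncard : ℤ) := by rw [hi, hv]
    exact_mod_cast this.ge
  have heq := Set.eq_of_subset_of_ncard_le hsub hcard (Set.toFinite _)
  have : y ∈ {z : X | S.R 3 x z ∧ S.R 1 x' z} := by rw [heq]; exact h3
  exact this.2

/-- If `(y,y') ∈ R4` and `(y,z) ∈ R1` then `(y',z) ∈ R3`. -/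
lemma pw_R1_to_R3 (S : PWScheme r X) {y y' z : X} (h4 : S.R 4 y y')
    (h1 : S.R 1 y z) : S.R 3 y' z := by
  have hi := S.inter 3 0 2 y y' h4
  have hv := S.valency 0 y
  have e1 : ((2:Fin 4).succ : Fin 5) = 3 := rfl
  have e2 : ((0:Fin 4).succ : Fin 5) = 1 := rfl
  rw [e2, e1] at hi
  rw [e2] at hv
  have ep : pwP (r:ℤ) 3 0 2 = (r-1)*((r:ℤ)^2+1) := rfl
  have en : pwN (r:ℤ) 0 = (r-1)*((r:ℤ)^2+1) := rfl
  rw [ep] at hi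
  rw [en] at hv
  have hsub : {w : X | S.R 1 y w ∧ S.R 3 y' w} ⊆ {w : X | S.R 1 y w} :=
    fun w hw => hw.1
  have hcard : ({w : X | S.R 1 y w}).ncard ≤ ({w : X | S.R 1 y w ∧ S.R 3 y' w}).ncard := by
    have : (({w : X | S.R 1 y w ∧ S.R 3 y' w}).ncard : ℤ)
        = (({w : X | S.R 1 y w}).ncard : ℤ) := by rw [hi, hv]
    exact_mod_cast this.ge
  have heq := Set.eq_of_subset_of_ncard_le hsub hcard (Set.toFinite _)
  have : z ∈ {w : X | S.R 1 y w ∧ S.R 3 y' w} := by rw [heq]; exact h1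
  exact this.2

/-- Antipodes of `R3`-related points are `R3`-related. -/
lemma pw_R3_antipode (S : PWScheme r X) {x y x' y' : X} (hx : S.R 4 x x')
    (hy : S.R 4 y y') (h3 : S.R 3 x y) : S.R 3 x' y' := by
  have h1 : S.R 1 x' y := pw_R3_to_R1 S hx h3
  have h1' : S.R 1 y x' := S.symm 1 _ _ h1
  exact S.symm 3 _ _ (pw_R1_to_R3 S hy h1')

/-- The antipode set of a `{0,3}`-clique is a `{0,3}`-clique. -/
lemma pw_antiSet_clique03 (S : PWScheme r X) {C : Set X} (hC : S.IsClique03 C) :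
    S.IsClique03 (S.antiSet C) := by
  rintro a ⟨x, hx, hxa⟩ b ⟨y, hy, hyb⟩
  rcases hC x hx y hy with h0 | h3
  · left
    rw [S.R0_iff] at h0 ⊢
    subst h0
    exact pw_antipode_unique S hxa hyb
  · right
    exact pw_R3_antipode S hxa hyb h3

/-- `antiSet` is involutive. -/
lemma pw_antiSet_antiSet (S : PWScheme r X) (C : Set X) :
    S.antiSet (S.antiSet C) = C := by
  ext z
  constructor
  · rintro ⟨a, ⟨x, hx, hxa⟩, haz⟩
    have : x = z := pw_antipode_unique S (S.symm 4 _ _ hxa) haz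
    exact this ▸ hx
  · intro hz
    obtain ⟨z', hz'⟩ := pw_exists_antipode S z
    exact ⟨z', ⟨z, hz, hz'⟩, S.symm 4 _ _ hz'⟩

end Aux

/-- if `C` is a clique then `C' = {x' : x ∈ C}` is a clique. -/
theorem statement_3 {r : ℕ} (hr : 3 ≤ r) {X : Type*} [Fintype X] (S : PWScheme r X)
    (C : Set X) (hC : S.IsClique C) :
    S.IsClique (S.antiSet C) := by
  obtain ⟨hC03, hCmax⟩ := hC
  refine ⟨pw_antiSet_clique03 S hC03, ?_⟩
  intro Z hZ hCZ
  have hZ' : S.IsClique03 (S.antiSet Z) := pw_antiSet_clique03 S hZ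
  have hCsub : C ⊆ S.antiSet Z := by
    intro x hx
    obtain ⟨x', hx'⟩ := pw_exists_antipode S x
    exact ⟨x', hCZ ⟨x, hx, hx'⟩, S.symm 4 _ _ hx'⟩
  have hCeq : C = S.antiSet Z := hCmax _ hZ' hCsub
  calc S.antiSet C = S.antiSet (S.antiSet Z) := by rw [hCeq]
    _ = Z := pw_antiSet_antiSet S Z
end
end

section
/- Let Q be a finite set with |Q| = r² + 1, and let U_1, ..., U_r be subsets of Q, each of size r + 1, whose union is Q and such that |U_i ∩ U_j| = 1 for all i ≠ j. Then there is an element common to all the sets U_1, ..., U_r (and this common element is unique). -/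
/-- let `r ≥ 2`, let `Q` be a finite set with `|Q| = r² + 1`, and let
`U_1, …, U_r` be subsets of `Q`, each of size `r + 1`, covering `Q`, with
`|U_i ∩ U_j| = 1` for `i ≠ j`. Then all the sets `U_i` have a (unique) common
element. -/
theorem statement_9 {r : ℕ} (hr : 2 ≤ r) {α : Type*} [DecidableEq α]
    (Q : Finset α) (hQ : Q.card = r^2 + 1)
    (U : Fin r → Finset α) (hsub : ∀ i, U i ⊆ Q) (hcard : ∀ i, (U i).card = r + 1)
    (hcover : ∀ q ∈ Q, ∃ i, q ∈ U i)
    (hint : ∀ i j, i ≠ j → (U i ∩ U j).card = 1) :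
    ∃! q : α, ∀ i, q ∈ U i := by
  classical
  set S : α → Finset (Fin r) := fun q => Finset.univ.filter (fun i => q ∈ U i) with hS
  set D : α → ℕ := fun q => (S q).card with hD
  have hD1 : ∀ q ∈ Q, 1 ≤ D q := by
    intro q hq
    obtain ⟨i, hi⟩ := hcover q hq
    have : i ∈ S q := by simp [hS, hi]
    exact Finset.card_pos.mpr ⟨i, this⟩
  have hDr : ∀ q, D q ≤ r := by
    intro q
    have := Finset.card_filter_le (Finset.univ : Finset (Fin r)) (fun i => q ∈ U i)
    simpa [hD, hS] using this
  -- sum of D over Q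
  have hsum : ∑ q ∈ Q, D q = r * (r + 1) := by
    have h1 : ∀ q, D q = ∑ i : Fin r, if q ∈ U i then 1 else 0 := by
      intro q; simp only [hD, hS, Finset.card_filter]
    calc ∑ q ∈ Q, D q = ∑ q ∈ Q, ∑ i : Fin r, if q ∈ U i then 1 else 0 :=
          Finset.sum_congr rfl (fun q _ => h1 q)
      _ = ∑ i : Fin r, ∑ q ∈ Q, if q ∈ U i then 1 else 0 := Finset.sum_comm
      _ = ∑ i : Fin r, (U i).card := by
          refine Finset.sum_congr rfl (fun i _ => ?_)
          rw [← Finset.card_filter, Finset.filter_mem_eq_inter,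
            Finset.inter_eq_right.mpr (hsub i)]
      _ = r * (r + 1) := by simp [hcard, Finset.sum_const, mul_comm]
  -- sum of D(D-1) over Q
  have hsum2 : ∑ q ∈ Q, D q * (D q - 1) = r * r - r := by
    have h1 : ∀ q, D q * (D q - 1) =
        ∑ p ∈ (Finset.univ : Finset (Fin r)).offDiag,
          if q ∈ U p.1 ∧ q ∈ U p.2 then 1 else 0 := by
      intro q
      have hset : (Finset.univ : Finset (Fin r)).offDiag.filter
          (fun p => q ∈ U p.1 ∧ q ∈ U p.2) = (S q).offDiag := by
        ext p
        simp [Finset.mem_offDiag, hS]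
        tauto
      rw [← Finset.card_filter, hset, Finset.offDiag_card]
      exact Nat.mul_pred _ _ ▸ rfl
    calc ∑ q ∈ Q, D q * (D q - 1)
        = ∑ q ∈ Q, ∑ p ∈ (Finset.univ : Finset (Fin r)).offDiag,
            if q ∈ U p.1 ∧ q ∈ U p.2 then 1 else 0 :=
          Finset.sum_congr rfl (fun q _ => h1 q)
      _ = ∑ p ∈ (Finset.univ : Finset (Fin r)).offDiag,
            ∑ q ∈ Q, if q ∈ U p.1 ∧ q ∈ U p.2 then 1 else 0 := Finset.sum_comm
      _ = ∑ p ∈ (Finset.univ : Finset (Fin r)).offDiag, 1 := by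
          refine Finset.sum_congr rfl (fun p hp => ?_)
          have hne : p.1 ≠ p.2 := (Finset.mem_offDiag.mp hp).2.2
          calc ∑ q ∈ Q, (if q ∈ U p.1 ∧ q ∈ U p.2 then 1 else 0)
              = (Q.filter (fun q => q ∈ U p.1 ∩ U p.2)).card := by
                rw [← Finset.card_filter]
                congr 1
                refine Finset.filter_congr (fun q _ => ?_)
                simp
            _ = (U p.1 ∩ U p.2).card := by
                rw [Finset.filter_mem_eq_inter, Finset.inter_eq_right.mpr]
                exact fun x hx => hsub p.1 (Finset.mem_inter.mp hx).1
            _ = 1 := hint p.1 p.2 hne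
      _ = r * r - r := by
          simp [Finset.sum_const, Finset.offDiag_card, Finset.card_univ, Fintype.card_fin]
  -- sum of (D - 1) over Q
  have hsum3 : ∑ q ∈ Q, (D q - 1) = r - 1 := by
    have h0 : ∑ q ∈ Q, (D q - 1) + Q.card = ∑ q ∈ Q, D q := by
      rw [Finset.card_eq_sum_ones, ← Finset.sum_add_distrib]
      exact Finset.sum_congr rfl (fun q hq => Nat.sub_add_cancel (hD1 q hq))
    have h4 : r * (r + 1) = r * r + r := by ring
    have h5 : r ^ 2 = r * r := sq r
    rw [hsum, hQ, h5, h4] at h0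
    generalize hm : r * r = m at h0
    omega
  -- existence of an element of degree r
  have hex : ∃ q ∈ Q, D q = r := by
    by_contra h
    push_neg at h
    have hlt : ∀ q ∈ Q, D q ≤ r - 1 := by
      intro q hq
      have h1 := hDr q
      have h2 := h q hq
      omega
    have hle : ∑ q ∈ Q, D q * (D q - 1) ≤ ∑ q ∈ Q, (r - 1) * (D q - 1) := by
      refine Finset.sum_le_sum (fun q hq => ?_)
      exact Nat.mul_le_mul_right _ (hlt q hq)
    rw [hsum2, ← Finset.mul_sum, hsum3] at hle
    have h2 : (r - 1) * (r - 1) + (r - 1) = r * r - r := by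
      zify [show 1 ≤ r by omega, show r ≤ r * r from Nat.le_mul_of_pos_left r (by omega)]
      ring
    have h3 : (r - 1) * (r - 1) < r * r - r := by
      rw [← h2]
      exact Nat.lt_add_of_pos_right (by omega)
    exact absurd hle (not_le.mpr h3)
  obtain ⟨q, hqQ, hq⟩ := hex
  have hall : ∀ i, q ∈ U i := by
    intro i
    have h1 : S q = Finset.univ :=
      Finset.eq_univ_of_card _ (by simpa [Fintype.card_fin] using hq)
    have h2 : i ∈ S q := h1 ▸ Finset.mem_univ i
    simpa [hS] using h2
  refine ⟨q, hall, ?_⟩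
  intro q' hq'
  have i0 : Fin r := ⟨0, by omega⟩
  have hne : (⟨0, by omega⟩ : Fin r) ≠ ⟨1, by omega⟩ := by
    simp [Fin.ext_iff]
  obtain ⟨a, ha⟩ := Finset.card_eq_one.mp (hint _ _ hne)
  have h1 : q' ∈ U ⟨0, by omega⟩ ∩ U ⟨1, by omega⟩ :=
    Finset.mem_inter.mpr ⟨hq' _, hq' _⟩
  have h2 : q ∈ U ⟨0, by omega⟩ ∩ U ⟨1, by omega⟩ :=
    Finset.mem_inter.mpr ⟨hall _, hall _⟩
  rw [ha, Finset.mem_singleton] at h1 h2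
  rw [h1, h2]
end
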